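/- Let Λ be a totally ordered abelian group and Λ₊ its nonnegative cone. Define a hyperoperation on Λ₊ by α ∘ β = {α + β − 2γ : 0 ≤ γ ≤ min(α, β)}. Then (Λ₊, ∘) is a commutative polygroup with scalar identity 0 and with each element its own inverse. -/

import Mathlib

/-- A polygroup (quasicanonical hypergroup): a nonempty-valued hyperoperation that is
associative, satisfies the reproduction axiom, has a scalar identity `e`, and an
inversion `inv` with `b/a = b ∘ ā` and `a\b = ā ∘ b`. -/
structure Polygroup (E : Type*) where
  hmul : E → E → Set E
  e : E
  inv : E → E
  hmul_nonempty : ∀ a b : E, (hmul a b).Nonempty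
  hmul_assoc : ∀ a b c : E, (⋃ u ∈ hmul b c, hmul a u) = ⋃ v ∈ hmul a b, hmul v c
  repro_left : ∀ a : E, (⋃ x : E, hmul x a) = Set.univ
  repro_right : ∀ a : E, (⋃ x : E, hmul a x) = Set.univ
  hmul_e : ∀ a : E, hmul a e = {a}
  e_hmul : ∀ a : E, hmul e a = {a}
  div_eq : ∀ a b : E, {x : E | b ∈ hmul x a} = hmul b (inv a)
  ldiv_eq : ∀ a b : E, {x : E | b ∈ hmul a x} = hmul (inv a) b


namespace NNConeAux

variable {Λ : Type*} [AddCommGroup Λ] [LinearOrder Λ] [IsOrderedAddMonoid Λ]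

def hm (α β : {a : Λ // 0 ≤ a}) : Set {a : Λ // 0 ≤ a} :=
  {x | ∃ γ : Λ, 0 ≤ γ ∧ γ ≤ min α.1 β.1 ∧ x.1 = α.1 + β.1 - (γ + γ)}

lemma hm_comm (α β : {a : Λ // 0 ≤ a}) : hm α β = hm β α := by
  ext x
  constructor <;> rintro ⟨γ, h0, hmn, hx⟩ <;>
    exact ⟨γ, h0, hmn.trans_eq (min_comm _ _), hx.trans (by abel)⟩

def tset (α β γ : {a : Λ // 0 ≤ a}) : Set {a : Λ // 0 ≤ a} :=
  {x | ∃ s : Λ, 0 ≤ s ∧ s ≤ α.1 + β.1 ∧ s ≤ α.1 + γ.1 ∧ s ≤ β.1 + γ.1 ∧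
    s + s ≤ α.1 + β.1 + γ.1 ∧ x.1 = α.1 + β.1 + γ.1 - (s + s)}

lemma tset_swap (α β γ : {a : Λ // 0 ≤ a}) : tset α β γ = tset γ β α := by
  ext x
  constructor <;> rintro ⟨s, h0, h1, h2, h3, h4, hx⟩ <;>
    exact ⟨s, h0, h3.trans_eq (add_comm _ _), h2.trans_eq (add_comm _ _),
      h1.trans_eq (add_comm _ _), h4.trans_eq (by abel), hx.trans (by abel)⟩

lemma union_eq (α β γ : {a : Λ // 0 ≤ a}) :
    (⋃ u ∈ hm β γ, hm α u) = tset α β γ := by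
  have hα := α.2; have hβ := β.2; have hγ := γ.2
  ext x
  simp only [Set.mem_iUnion, exists_prop]
  constructor
  · rintro ⟨u, ⟨δ, hδ0, hδm, hu⟩, ⟨ε, hε0, hεm, hx⟩⟩
    rw [le_min_iff] at hδm hεm
    obtain ⟨hδβ, hδγ⟩ := hδm
    obtain ⟨hεα, hεu⟩ := hεm
    rw [hu] at hεu hx
    refine ⟨δ + ε, add_nonneg hδ0 hε0,
      (add_le_add hδβ hεα).trans_eq (add_comm _ _),
      (add_le_add hδγ hεα).trans_eq (add_comm _ _), ?_, ?_, hx.trans (by abel)⟩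
    · calc δ + ε ≤ δ + (β.1 + γ.1 - (δ + δ)) := add_le_add le_rfl hεu
        _ = β.1 + γ.1 - δ := by abel
        _ ≤ β.1 + γ.1 := sub_le_self _ hδ0
    · calc (δ + ε) + (δ + ε) = (δ + δ) + (ε + ε) := by abel
        _ ≤ (δ + δ) + (α.1 + (β.1 + γ.1 - (δ + δ))) :=
            add_le_add le_rfl (add_le_add hεα hεu)
        _ = α.1 + β.1 + γ.1 := by abel
  · rintro ⟨s, h0, h1, h2, h3, h4, hx⟩
    rcases le_total s α.1 with h | h
    · exact ⟨⟨β.1 + γ.1, add_nonneg hβ hγ⟩,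
        ⟨0, le_refl 0, le_min hβ hγ, show β.1 + γ.1 = _ by abel⟩,
        ⟨s, h0, le_min h h3, by rw [hx]; dsimp only; abel⟩⟩
    · have hu0 : 0 ≤ β.1 + γ.1 - ((s - α.1) + (s - α.1)) := by
        refine sub_nonneg.2 ?_
        calc (s - α.1) + (s - α.1) = (s + s) - (α.1 + α.1) := by abel
          _ ≤ (α.1 + β.1 + γ.1) - (α.1 + α.1) := sub_le_sub_right h4 _
          _ = β.1 + γ.1 - α.1 := by abel
          _ ≤ β.1 + γ.1 := sub_le_self _ hα
      refine ⟨⟨β.1 + γ.1 - ((s - α.1) + (s - α.1)), hu0⟩,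
        ⟨s - α.1, sub_nonneg.2 h,
          le_min (sub_le_iff_le_add.2 (h1.trans_eq (add_comm _ _)))
            (sub_le_iff_le_add.2 (h2.trans_eq (add_comm _ _))), rfl⟩,
        ⟨α.1, hα, le_min (le_refl _) ?_, by rw [hx]; dsimp only; abel⟩⟩
      show α.1 ≤ β.1 + γ.1 - ((s - α.1) + (s - α.1))
      refine le_sub_iff_add_le.2 ?_
      calc α.1 + ((s - α.1) + (s - α.1)) = (s + s) - α.1 := by abel
        _ ≤ (α.1 + β.1 + γ.1) - α.1 := sub_le_sub_right h4 _
        _ = β.1 + γ.1 := by abel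

lemma hm_assoc (α β γ : {a : Λ // 0 ≤ a}) :
    (⋃ u ∈ hm β γ, hm α u) = ⋃ v ∈ hm α β, hm v γ := by
  have h2 : (⋃ v ∈ hm α β, hm v γ) = ⋃ v ∈ hm β α, hm γ v := by
    rw [hm_comm α β]
    exact Set.iUnion₂_congr fun v _ => hm_comm v γ
  rw [union_eq, h2, union_eq, tset_swap]

lemma repro (a b : {a : Λ // 0 ≤ a}) : ∃ x, b ∈ hm x a := by
  refine ⟨⟨a.1 + b.1, add_nonneg a.2 b.2⟩, a.1, a.2,
    le_min (le_add_of_nonneg_right b.2) (le_refl _),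
    show b.1 = (a.1 + b.1) + a.1 - (a.1 + a.1) by abel⟩

lemma hm_zero (a : {a : Λ // 0 ≤ a}) : hm a ⟨0, le_refl 0⟩ = {a} := by
  ext x
  simp only [Set.mem_singleton_iff, hm, Set.mem_setOf_eq]
  constructor
  · rintro ⟨γ, h0, hmn, hx⟩
    have hγ0 : γ = 0 := le_antisymm (le_trans hmn (min_le_right _ _)) h0
    apply Subtype.ext
    rw [hx, hγ0]
    abel
  · intro h
    exact ⟨0, le_refl 0, le_min a.2 (le_refl 0), by rw [h]; abel⟩

lemma div (a b : {a : Λ // 0 ≤ a}) : {x | b ∈ hm x a} = hm b a := by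
  ext x
  simp only [Set.mem_setOf_eq]
  constructor
  · rintro ⟨γ, h0, hmn, hbx⟩
    rw [le_min_iff] at hmn
    refine ⟨a.1 - γ, sub_nonneg.2 hmn.2,
      le_min (sub_le_iff_le_add.2 ?_) (sub_le_self _ h0), by rw [hbx]; abel⟩
    calc a.1 ≤ a.1 + (x.1 - γ) := le_add_of_nonneg_right (sub_nonneg.2 hmn.1)
      _ = b.1 + γ := by rw [hbx]; abel
  · rintro ⟨δ, h0, hmn, hxv⟩
    rw [le_min_iff] at hmn
    refine ⟨a.1 - δ, sub_nonneg.2 hmn.2,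
      le_min ?_ (sub_le_self _ h0), by rw [hxv]; abel⟩
    rw [hxv]
    calc a.1 - δ ≤ (a.1 - δ) + (b.1 - δ) := le_add_of_nonneg_right (sub_nonneg.2 hmn.1)
      _ = b.1 + a.1 - (δ + δ) := by abel

end NNConeAux

open NNConeAux in
theorem nonnegCone_polygroup {Λ : Type*} [AddCommGroup Λ] [LinearOrder Λ] [IsOrderedAddMonoid Λ] :
    ∃ P : Polygroup {a : Λ // 0 ≤ a},
      (∀ α β : {a : Λ // 0 ≤ a},
        P.hmul α β =
          {x : {a : Λ // 0 ≤ a} |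
            ∃ γ : Λ, 0 ≤ γ ∧ γ ≤ min α.1 β.1 ∧ x.1 = α.1 + β.1 - (γ + γ)}) ∧
      P.e = ⟨0, le_refl 0⟩ ∧
      (∀ a : {a : Λ // 0 ≤ a}, P.inv a = a) ∧
      (∀ α β : {a : Λ // 0 ≤ a}, P.hmul α β = P.hmul β α) := by
  refine ⟨{
    hmul := hm
    e := ⟨0, le_refl 0⟩
    inv := fun a => a
    hmul_nonempty := fun a b => ⟨⟨a.1 + b.1, add_nonneg a.2 b.2⟩,
      0, le_refl 0, le_min a.2 b.2, show a.1 + b.1 = a.1 + b.1 - (0 + 0) by abel⟩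
    hmul_assoc := hm_assoc
    repro_left := fun a => Set.eq_univ_of_forall fun b => by
      obtain ⟨x, hx⟩ := repro a b
      exact Set.mem_iUnion.2 ⟨x, hx⟩
    repro_right := fun a => Set.eq_univ_of_forall fun b => by
      obtain ⟨x, hx⟩ := repro a b
      rw [hm_comm x a] at hx
      exact Set.mem_iUnion.2 ⟨x, hx⟩
    hmul_e := hm_zero
    e_hmul := fun a => by rw [hm_comm]; exact hm_zero a
    div_eq := fun a b => div a b
    ldiv_eq := fun a b => by
      have h : {x | b ∈ hm a x} = {x | b ∈ hm x a} := by
        ext x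
        simp only [Set.mem_setOf_eq, hm_comm a]
      rw [h, div, hm_comm]
  }, fun α β => rfl, rfl, fun a => rfl, hm_comm⟩
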